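/- Corollary 3.2(b), regret part: Let X = {x ∈ ℝ^d : ‖x‖₂ ≤ 1} and let Φ : X × [0,1] → ℝ^{d+1} be the feature map Φ(x,p) = (x, p). If a transcript (x_1,p_1,y_1),…,(x_T,p_T,y_T) with all p_t, y_t ∈ [0,1] satisfies the K29 invariant for Φ (for every t and every y ∈ [0,1], (y − p_t)·⟨Φ(x_t,p_t), Σ_{i=1}^{t−1}(y_i − p_i)Φ(x_i,p_i)⟩ ≤ 0), then for every θ ∈ ℝ^d with ‖θ‖₂ ≤ 1: |Σ_{t=1}^T (⟨θ, x_t⟩ + p_t)(y_t − p_t)| ≤ 2√T. -/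

import Mathlib

open Finset Set
open scoped RealInnerProductSpace

/-- **Corollary 3.2(b), regret part.**
Let `X = {x ∈ ℝ^d : ‖x‖₂ ≤ 1}` and let `Φ : X × [0,1] → ℝ^{d+1}` be the feature map
`Φ (x, p) = (x, p)` (into `ℝ^d × ℝ` with the product inner product, i.e. `WithLp 2`).
If a transcript `(x_t, p_t, y_t)` with `p_t, y_t ∈ [0,1]` satisfies the K29 invariant
for `Φ`, then for every `θ ∈ ℝ^d` with `‖θ‖₂ ≤ 1`,
`|∑_t (⟪θ, x t⟫ + p t) (y t − p t)| ≤ 2 √T`. -/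
theorem k29_linear_regret (d : ℕ)
    (Φ : EuclideanSpace ℝ (Fin d) → ℝ → WithLp 2 (EuclideanSpace ℝ (Fin d) × ℝ))
    (hΦ : ∀ (x : EuclideanSpace ℝ (Fin d)) (p : ℝ),
      Φ x p = (WithLp.equiv 2 (EuclideanSpace ℝ (Fin d) × ℝ)).symm (x, p))
    (T : ℕ) (x : Fin T → EuclideanSpace ℝ (Fin d)) (hx : ∀ t, ‖x t‖ ≤ 1)
    (p y : Fin T → ℝ)
    (hp : ∀ t, p t ∈ Icc (0:ℝ) 1) (hy : ∀ t, y t ∈ Icc (0:ℝ) 1)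
    (hinv : ∀ t : Fin T, ∀ y' ∈ Icc (0:ℝ) 1,
      (y' - p t) *
        ⟪Φ (x t) (p t), ∑ i ∈ Finset.Iio t, (y i - p i) • Φ (x i) (p i)⟫ ≤ 0) :
    ∀ θ : EuclideanSpace ℝ (Fin d), ‖θ‖ ≤ 1 →
      |∑ t, (⟪θ, x t⟫ + p t) * (y t - p t)| ≤ 2 * Real.sqrt T := by
  intro θ hθ
  set S : ℕ → WithLp 2 (EuclideanSpace ℝ (Fin d) × ℝ) := fun n =>
    ∑ i ∈ Finset.univ.filter (fun i : Fin T => (i : ℕ) < n),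
      (y i - p i) • Φ (x i) (p i) with hSdef
  -- coefficient bound
  have hc : ∀ t, (y t - p t) ^ 2 ≤ 1 := by
    intro t
    have h1 := hp t; have h2 := hy t
    simp only [Set.mem_Icc] at h1 h2
    nlinarith [h1.1, h1.2, h2.1, h2.2]
  -- norm of feature vectors
  have hφn : ∀ t, ‖Φ (x t) (p t)‖ ^ 2 ≤ 2 := by
    intro t
    have heq : ‖Φ (x t) (p t)‖ ^ 2 = ⟪Φ (x t) (p t), Φ (x t) (p t)⟫ :=
      (real_inner_self_eq_norm_sq _).symm
    rw [heq, hΦ]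
    simp only [WithLp.prod_inner_apply, WithLp.equiv_symm_apply, WithLp.ofLp_toLp]
    have h1 : ⟪x t, x t⟫ = ‖x t‖ ^ 2 := real_inner_self_eq_norm_sq _
    have h2 : ⟪p t, p t⟫ = p t * p t := rfl
    have h3 : ‖x t‖ ^ 2 ≤ 1 := by nlinarith [hx t, norm_nonneg (x t)]
    have h4 := hp t; simp only [Set.mem_Icc] at h4
    rw [h1, h2]; nlinarith [h4.1, h4.2]
  -- main inductive bound
  have hS : ∀ n, n ≤ T → ‖S n‖ ^ 2 ≤ 2 * n := by
    intro n
    induction n with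
    | zero =>
      intro _
      have h0 : S 0 = 0 := by rw [hSdef]; simp
      rw [h0]; simp
    | succ n ih =>
      intro hn
      have hn' : n < T := hn
      set t : Fin T := ⟨n, hn'⟩ with ht
      have hfilter : (Finset.univ.filter (fun i : Fin T => (i : ℕ) < n + 1)) =
          insert t (Finset.univ.filter (fun i : Fin T => (i : ℕ) < n)) := by
        ext i
        simp only [Finset.mem_insert, Finset.mem_filter, Finset.mem_univ, true_and,
          Nat.lt_succ_iff_lt_or_eq, ht, Fin.ext_iff]
        tauto
      have hnotmem : t ∉ Finset.univ.filter (fun i : Fin T => (i : ℕ) < n) := by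
        simp [ht]
      have hstep : S (n + 1) = S n + (y t - p t) • Φ (x t) (p t) := by
        rw [hSdef]
        simp only
        rw [hfilter, Finset.sum_insert hnotmem]
        abel
      have hIio : Finset.Iio t = Finset.univ.filter (fun i : Fin T => (i : ℕ) < n) := by
        ext i
        simp [Finset.mem_Iio, Fin.lt_def, ht]
      have hinner : (y t - p t) * ⟪Φ (x t) (p t), S n⟫ ≤ 0 := by
        have h := hinv t (y t) (hy t)
        rw [hIio] at h
        rw [hSdef]
        exact h
      have hexp : ‖S (n + 1)‖ ^ 2 =
          ‖S n‖ ^ 2 + 2 * ((y t - p t) * ⟪Φ (x t) (p t), S n⟫) +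
            (y t - p t) ^ 2 * ‖Φ (x t) (p t)‖ ^ 2 := by
        rw [hstep, norm_add_sq_real, real_inner_smul_right, norm_smul]
        rw [real_inner_comm]
        simp only [Real.norm_eq_abs, mul_pow, sq_abs]
        try ring
      have h1 : (y t - p t) ^ 2 * ‖Φ (x t) (p t)‖ ^ 2 ≤ 2 := by
        calc (y t - p t) ^ 2 * ‖Φ (x t) (p t)‖ ^ 2 ≤ 1 * 2 :=
              mul_le_mul (hc t) (hφn t) (by positivity) (by norm_num)
        _ = 2 := by norm_num
      have hihn := ih (le_of_lt hn')
      rw [hexp]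
      push_cast
      nlinarith
  -- the test vector
  set v : WithLp 2 (EuclideanSpace ℝ (Fin d) × ℝ) :=
    (WithLp.equiv 2 (EuclideanSpace ℝ (Fin d) × ℝ)).symm (θ, 1) with hv
  have hvn : ‖v‖ ^ 2 ≤ 2 := by
    have heq : ‖v‖ ^ 2 = ⟪v, v⟫ := (real_inner_self_eq_norm_sq _).symm
    rw [heq, hv]
    simp only [WithLp.prod_inner_apply, WithLp.equiv_symm_apply, WithLp.ofLp_toLp]
    have h1 : ⟪θ, θ⟫ = ‖θ‖ ^ 2 := real_inner_self_eq_norm_sq _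
    have h2 : ⟪(1:ℝ), (1:ℝ)⟫ = (1:ℝ) := by simp [RCLike.inner_apply]
    rw [h1, h2]
    nlinarith [norm_nonneg θ]
  have hfull : Finset.univ.filter (fun i : Fin T => (i : ℕ) < T) = Finset.univ := by
    ext i; simp [i.isLt]
  have hrepr : ⟪v, S T⟫ = ∑ t, (⟪θ, x t⟫ + p t) * (y t - p t) := by
    rw [hSdef]
    simp only [hfull]
    rw [inner_sum]
    apply Finset.sum_congr rfl
    intro i _
    rw [real_inner_smul_right, hΦ, hv]
    simp only [WithLp.prod_inner_apply, WithLp.equiv_symm_apply, WithLp.ofLp_toLp]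
    have h2 : ⟪(1:ℝ), p i⟫ = p i := by simp [RCLike.inner_apply]
    rw [h2]; ring
  have hST : ‖S T‖ ^ 2 ≤ 2 * T := hS T le_rfl
  have hcs : |⟪v, S T⟫| ≤ ‖v‖ * ‖S T‖ := abs_real_inner_le_norm _ _
  rw [← hrepr]
  have hvle : ‖v‖ ≤ Real.sqrt 2 := by
    rw [← Real.sqrt_sq (norm_nonneg v)]
    exact Real.sqrt_le_sqrt hvn
  have hSle : ‖S T‖ ≤ Real.sqrt (2 * T) := by
    rw [← Real.sqrt_sq (norm_nonneg (S T))]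
    exact Real.sqrt_le_sqrt hST
  calc |⟪v, S T⟫| ≤ ‖v‖ * ‖S T‖ := hcs
  _ ≤ Real.sqrt 2 * Real.sqrt (2 * T) := by
      exact mul_le_mul hvle hSle (norm_nonneg _) (Real.sqrt_nonneg _)
  _ = 2 * Real.sqrt T := by
      rw [← Real.sqrt_mul (by norm_num : (0:ℝ) ≤ 2)]
      rw [show (2:ℝ) * (2 * T) = 4 * T by ring,
        Real.sqrt_mul (by norm_num : (0:ℝ) ≤ 4)]
      rw [show (4:ℝ) = 2 ^ 2 by norm_num, Real.sqrt_sq (by norm_num : (0:ℝ) ≤ 2)]
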